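/- Let H be a weak Hopf algebra and A a left H-module algebra. Suppose u ∈ Hom(H,A) is (e,f)-invertible such that e(h) = h · 1_A and u(h₁) a f(h₂) = u(h) a for all a ∈ A, h ∈ H. Then the action satisfies h · a = u(h₁) a u⁻¹(h₂) for all h, a if and only if (h₁ · a) u(h₂) = u(h) a for all h, a. -/
import Mathlib


open TensorProduct LinearMap

noncomputable section

section Defs

variable (k : Type*) [CommRing k]

/-- Convolution product on `Hom(C, A)`: `(φ * ψ)(c) = φ(c₁) ψ(c₂)`. -/
def conv {C A : Type*} [AddCommMonoid C] [Module k C] [Coalgebra k C]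
    [Ring A] [Algebra k A] (φ ψ : C →ₗ[k] A) : C →ₗ[k] A :=
  LinearMap.mul' k A ∘ₗ TensorProduct.map φ ψ ∘ₗ Coalgebra.comul

variable (H : Type*) [Ring H] [Algebra k H] [Coalgebra k H]

/-- The target counital map `ε_t(h) = ε(1₁ h) 1₂`. -/
def epsT : H →ₗ[k] H :=
  (TensorProduct.lid k H).toLinearMap ∘ₗ TensorProduct.map Coalgebra.counit LinearMap.id
    ∘ₗ LinearMap.mulLeft k (Coalgebra.comul (R := k) (1 : H))
    ∘ₗ (TensorProduct.mk k H H).flip 1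

/-- The source counital map `ε_s(h) = 1₁ ε(h 1₂)`. -/
def epsS : H →ₗ[k] H :=
  (TensorProduct.rid k H).toLinearMap ∘ₗ TensorProduct.map LinearMap.id Coalgebra.counit
    ∘ₗ LinearMap.mulRight k (Coalgebra.comul (R := k) (1 : H))
    ∘ₗ TensorProduct.mk k H H 1

/-- The axioms making the algebra-and-coalgebra `H` a weak Hopf algebra with
antipode `S`. -/
structure IsWeakHopf (S : H →ₗ[k] H) : Prop where
  comul_mul : ∀ g h : H,
    Coalgebra.comul (R := k) (g * h) = Coalgebra.comul (R := k) g * Coalgebra.comul (R := k) h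
  comul_one_left :
    TensorProduct.map (Coalgebra.comul (R := k)) LinearMap.id (Coalgebra.comul (R := k) (1 : H)) =
      (Coalgebra.comul (R := k) (1 : H) ⊗ₜ (1 : H)) *
        ((TensorProduct.assoc k H H H).symm ((1 : H) ⊗ₜ Coalgebra.comul (R := k) (1 : H)))
  comul_one_right :
    TensorProduct.map (Coalgebra.comul (R := k)) LinearMap.id (Coalgebra.comul (R := k) (1 : H)) =
      ((TensorProduct.assoc k H H H).symm ((1 : H) ⊗ₜ Coalgebra.comul (R := k) (1 : H))) *
        (Coalgebra.comul (R := k) (1 : H) ⊗ₜ (1 : H))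
  counit_mul_left : ∀ h g l : H,
    Coalgebra.counit (R := k) (h * g * l) =
      conv k (Coalgebra.counit ∘ₗ LinearMap.mulLeft k h)
        (Coalgebra.counit ∘ₗ LinearMap.mulRight k l) g
  counit_mul_right : ∀ h g l : H,
    Coalgebra.counit (R := k) (h * g * l) =
      conv k (Coalgebra.counit ∘ₗ LinearMap.mulRight k l)
        (Coalgebra.counit ∘ₗ LinearMap.mulLeft k h) g
  conv_id_antipode : conv k LinearMap.id S = epsT k H
  conv_antipode_id : conv k S LinearMap.id = epsS k H
  conv_antipode_id_antipode : conv k (conv k S LinearMap.id) S = S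

/-- `smul3 u v a` is the linear map `h ↦ u(h₁) a v(h₂)` (Sweedler notation). -/
def smul3 {A : Type*} [Ring A] [Algebra k A] (u v : H →ₗ[k] A) (a : A) : H →ₗ[k] A :=
  TensorProduct.lift ((LinearMap.mul k A ∘ₗ LinearMap.mulRight k a ∘ₗ u).compl₂ v)
    ∘ₗ Coalgebra.comul

/-- The bilinear map `t(g, h) = v(h₁) v(g₁) u(g₂ h₂)`, as a linear map on `H ⊗ H`. -/
def tmap {A : Type*} [Ring A] [Algebra k A] (u v : H →ₗ[k] A) : H ⊗[k] H →ₗ[k] A :=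
  LinearMap.mul' k A ∘ₗ
    TensorProduct.map
      (LinearMap.mul' k A ∘ₗ TensorProduct.map v v ∘ₗ (TensorProduct.comm k H H).toLinearMap)
      (u ∘ₗ LinearMap.mul' k H) ∘ₗ
    (TensorProduct.tensorTensorTensorComm k H H H H).toLinearMap ∘ₗ
    TensorProduct.map Coalgebra.comul Coalgebra.comul

end Defs


section Aux

variable (k : Type*) [CommRing k] (H : Type*) [Ring H] [Algebra k H] [Coalgebra k H]
variable {A : Type*} [Ring A] [Algebra k A]

lemma conv_assoc (φ ψ χ : H →ₗ[k] A) :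
    conv k (conv k φ ψ) χ = conv k φ (conv k ψ χ) := by
  have h1 : LinearMap.mul' k A ∘ₗ TensorProduct.map (conv k φ ψ) χ =
      (LinearMap.mul' k A ∘ₗ TensorProduct.map (LinearMap.mul' k A) χ ∘ₗ
        TensorProduct.map (TensorProduct.map φ ψ) LinearMap.id) ∘ₗ
        (Coalgebra.comul (R := k) (A := H)).rTensor H := by
    apply TensorProduct.ext'
    intro x y
    simp [conv]
  have h2 : LinearMap.mul' k A ∘ₗ TensorProduct.map φ (conv k ψ χ) =
      (LinearMap.mul' k A ∘ₗ TensorProduct.map φ (LinearMap.mul' k A) ∘ₗ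
        TensorProduct.map LinearMap.id (TensorProduct.map ψ χ)) ∘ₗ
        (Coalgebra.comul (R := k) (A := H)).lTensor H := by
    apply TensorProduct.ext'
    intro x y
    simp [conv]
  have h3 : LinearMap.mul' k A ∘ₗ TensorProduct.map (LinearMap.mul' k A) χ ∘ₗ
        TensorProduct.map (TensorProduct.map φ ψ) LinearMap.id =
      (LinearMap.mul' k A ∘ₗ TensorProduct.map φ (LinearMap.mul' k A) ∘ₗ
        TensorProduct.map LinearMap.id (TensorProduct.map ψ χ)) ∘ₗ
        (TensorProduct.assoc k H H H).toLinearMap := by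
    apply TensorProduct.ext_threefold
    intro x y z
    simp [mul_assoc]
  apply LinearMap.ext
  intro h
  have e1 := LinearMap.congr_fun h1 (Coalgebra.comul (R := k) h)
  have e2 := LinearMap.congr_fun h2 (Coalgebra.comul (R := k) h)
  have e3 := LinearMap.congr_fun h3
      ((Coalgebra.comul (R := k) (A := H)).rTensor H (Coalgebra.comul (R := k) h))
  simp only [LinearMap.comp_apply] at e1 e2 e3
  have lhs : conv k (conv k φ ψ) χ h =
      LinearMap.mul' k A (TensorProduct.map (conv k φ ψ) χ (Coalgebra.comul (R := k) h)) := rfl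
  have rhs : conv k φ (conv k ψ χ) h =
      LinearMap.mul' k A (TensorProduct.map φ (conv k ψ χ) (Coalgebra.comul (R := k) h)) := rfl
  rw [lhs, rhs, e1, e2, e3, LinearEquiv.coe_coe, Coalgebra.coassoc_apply]

lemma smul3_eq (u w : H →ₗ[k] A) (a : A) :
    smul3 k H u w a = conv k (LinearMap.mulRight k a ∘ₗ u) w := by
  have : TensorProduct.lift ((LinearMap.mul k A ∘ₗ LinearMap.mulRight k a ∘ₗ u).compl₂ w) =
      LinearMap.mul' k A ∘ₗ TensorProduct.map (LinearMap.mulRight k a ∘ₗ u) w := by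
    apply TensorProduct.ext'
    intro x y
    simp
  unfold smul3 conv
  rw [this, LinearMap.comp_assoc]

end Aux

section Statement

variable (k : Type*) [Field k] (H : Type*) [Ring H] [Algebra k H] [Coalgebra k H]
  [FiniteDimensional k H] (A : Type*) [Ring A] [Algebra k A]

/-- Proposition 3.8: let `A` be a left `H`-module algebra with action
`α : H → End(A)` and let `u ∈ Hom(H,A)` be `(e,f)`-invertible with `e(h) = h · 1`
and `u(h₁) a f(h₂) = u(h) a`.  Then the action is inner implemented by `u`, i.e.
`h · a = u(h₁) a u⁻¹(h₂)`, if and only if `(h₁ · a) u(h₂) = u(h) a` for all `h, a`. -/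
theorem inner_action_iff (S : H →ₗ[k] H) (hH : IsWeakHopf k H S)
    (α : H →ₗ[k] A →ₗ[k] A)
    -- `A` is a left `H`-module:
    (hα_one : α 1 = LinearMap.id)
    (hα_mul : ∀ g h : H, α (g * h) = α g ∘ₗ α h)
    -- `A` is a left `H`-module algebra:
    (hα_mulA : ∀ (h : H) (a b : A), α h (a * b) = conv k (α.flip a) (α.flip b) h)
    (hα_unit : ∀ h : H, α h 1 = α (epsT k H h) 1)
    (e f u v : H →ₗ[k] A)
    (he : conv k e e = e) (hf : conv k f f = f)
    (huv : conv k u v = e) (hvu : conv k v u = f)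
    (huf : conv k u f = u) (hfv : conv k f v = v)
    (hE : ∀ h : H, e h = α h 1)
    (hUF : ∀ (h : H) (a : A), smul3 k H u f a h = u h * a) :
    (∀ (h : H) (a : A), α h a = smul3 k H u v a h) ↔
      (∀ (h : H) (a : A), conv k (α.flip a) u h = u h * a) := by
  -- `e` equals `h ↦ α h 1` as a linear map
  have hEmap : e = α.flip (1 : A) := by
    apply LinearMap.ext
    intro h
    simpa using hE h
  -- convolving with `e` on the right is the identity on `α.flip a`
  have habs : ∀ a : A, conv k (α.flip a) e = α.flip a := by
    intro a
    apply LinearMap.ext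
    intro h
    rw [hEmap]
    have := (hα_mulA h a 1).symm
    rwa [mul_one] at this
  constructor
  · intro hin h a
    have hmap : α.flip a = smul3 k H u v a := by
      apply LinearMap.ext
      intro g
      simpa using hin g a
    rw [hmap, smul3_eq, conv_assoc, hvu, ← smul3_eq, hUF]
  · intro hc h a
    have hcmap : conv k (α.flip a) u = LinearMap.mulRight k a ∘ₗ u := by
      apply LinearMap.ext
      intro g
      simpa using hc g a
    have : α h a = (α.flip a) h := rfl
    rw [this, ← habs a, ← huv, ← conv_assoc, hcmap, ← smul3_eq]


end Statement
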